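/- Let f, f₁, f₂, f₁₂ be four distinct points on a circle in the complex plane (identified with C), with cross-ratio q(f,f₁,f₁₂,f₂) = ((f₁-f)(f₁₂-f₂))/((f₁₂-f₁)(f₂-f)). Suppose there exist nonzero reals α₁, α₂ and a positive function s on the four vertices such that q = α₁/α₂. Then, setting α₁ = |f₁-f|²/(s s₁) = |f₁₂-f₂|²/(s₂ s₁₂) and α₂ = |f₂-f|²/(s s₂) = |f₁₂-f₁|²/(s₁ s₁₂), the identity α₁(f₁-f)^{-1} + α₂(f₁₂-f₁)^{-1} = α₂(f₂-f)^{-1} + α₁(f₁₂-f₂)^{-1} holds in C, provided f₁₂ + f ≠ f₁ + f₂. -/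

import Mathlib

/-- For a concyclic quadrilateral `(f, f₁, f₁₂, f₂)` in `ℂ` with factorized real
cross-ratio `q = α₁/α₂` and discrete metric `s`, the Moutard-type relation
`α₁(f₁-f)⁻¹ + α₂(f₁₂-f₁)⁻¹ = α₂(f₂-f)⁻¹ + α₁(f₁₂-f₂)⁻¹` holds. -/
theorem isothermic_quad_moutard_relation
    (f f₁ f₂ f₁₂ : ℂ)
    (hd1 : f ≠ f₁) (hd2 : f ≠ f₂) (hd3 : f ≠ f₁₂)
    (hd4 : f₁ ≠ f₂) (hd5 : f₁ ≠ f₁₂) (hd6 : f₂ ≠ f₁₂)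
    (s s₁ s₂ s₁₂ : ℝ)
    (hs : 0 < s) (hs₁ : 0 < s₁) (hs₂ : 0 < s₂) (hs₁₂ : 0 < s₁₂)
    (α₁ α₂ : ℝ) (hα₁ : α₁ ≠ 0) (hα₂ : α₂ ≠ 0)
    (ha1 : α₁ = ‖f₁ - f‖ ^ 2 / (s * s₁))
    (ha1' : α₁ = ‖f₁₂ - f₂‖ ^ 2 / (s₂ * s₁₂))
    (ha2 : α₂ = ‖f₂ - f‖ ^ 2 / (s * s₂))
    (ha2' : α₂ = ‖f₁₂ - f₁‖ ^ 2 / (s₁ * s₁₂))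
    (hq : (f₁ - f) * (f₁₂ - f₂) / ((f₁₂ - f₁) * (f₂ - f)) = ((α₁ / α₂ : ℝ) : ℂ))
    (hgen : f₁₂ + f ≠ f₁ + f₂) :
    (α₁ : ℂ) * (f₁ - f)⁻¹ + (α₂ : ℂ) * (f₁₂ - f₁)⁻¹ =
      (α₂ : ℂ) * (f₂ - f)⁻¹ + (α₁ : ℂ) * (f₁₂ - f₂)⁻¹ := by
  have ha : f₁ - f ≠ 0 := sub_ne_zero.mpr hd1.symm
  have hb : f₁₂ - f₁ ≠ 0 := sub_ne_zero.mpr hd5.symm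
  have hc : f₂ - f ≠ 0 := sub_ne_zero.mpr hd2.symm
  have hd : f₁₂ - f₂ ≠ 0 := sub_ne_zero.mpr hd6.symm
  have hα₂' : (α₂ : ℂ) ≠ 0 := by exact_mod_cast hα₂
  have key : (α₂ : ℂ) * ((f₁ - f) * (f₁₂ - f₂)) = (α₁ : ℂ) * ((f₁₂ - f₁) * (f₂ - f)) := by
    have := hq
    push_cast at this
    field_simp at this
    linear_combination this
  field_simp
  linear_combination (f₂ - f₁₂ + f₁ - f) * key
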